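/- Let H be a class of boolean functions on X with 0 < VC(H) = d < ∞ and let n ≥ d. Then the optimal agnostic transductive online regret satisfies R(H,n) ≥ (d·√(⌊n/d⌋))/(2√2) = Ω(√(dn)). -/

import Mathlib

open scoped Classical
open Finset



lemma central_sq : ∀ m : ℕ, 1 ≤ m → 16^m ≤ 4*m*(Nat.centralBinom m)^2 := by
  intro m hm
  induction m with
  | zero => omega
  | succ m ih =>
    rcases Nat.eq_zero_or_pos m with h0 | hm1
    · subst h0; norm_num [Nat.centralBinom, Nat.choose]
    · have ihm := ih hm1
      have key := Nat.succ_mul_centralBinom_succ m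
      have h4 : 4*m*(m+1) ≤ (2*m+1)^2 := by nlinarith
      have main : (m+1) * 16^(m+1) ≤ (m+1) * (4*(m+1)*(Nat.centralBinom (m+1))^2) := by
        calc (m+1) * 16^(m+1) = 16 * ((m+1) * 16^m) := by ring
        _ ≤ 16 * ((m+1) * (4*m*(Nat.centralBinom m)^2)) := by
              exact Nat.mul_le_mul_left _ (Nat.mul_le_mul_left _ ihm)
        _ = 16 * ((4*m*(m+1)) * (Nat.centralBinom m)^2) := by ring
        _ ≤ 16 * ((2*m+1)^2 * (Nat.centralBinom m)^2) := by
              exact Nat.mul_le_mul_left _ (Nat.mul_le_mul_right _ h4)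
        _ = 4 * (2*(2*m+1)*Nat.centralBinom m)^2 := by ring
        _ = 4 * ((m+1)*Nat.centralBinom (m+1))^2 := by rw [key]
        _ = (m+1) * (4*(m+1)*(Nat.centralBinom (m+1))^2) := by ring
      exact Nat.le_of_mul_le_mul_left main (by omega)

lemma choose_bound (k : ℕ) (hk : 1 ≤ k) : 4^k ≤ 8 * k * (Nat.choose (k-1) ((k-1)/2))^2 := by
  rcases Nat.even_or_odd k with ⟨m, hme⟩ | ⟨m, hmo⟩
  · -- k = 2m, m ≥ 1 ; k-1 = 2m-1 odd, (k-1)/2 = m-1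
    have hm1 : 1 ≤ m := by omega
    obtain ⟨m', rfl⟩ : ∃ m', m = m' + 1 := ⟨m-1, by omega⟩
    have hkk : k = 2*m'+2 := by omega
    subst hkk
    -- (k-1) = 2m'+1, (k-1)/2 = m'
    have h1 : (2*m'+2-1) = 2*m'+1 := by omega
    have h2 : (2*m'+1)/2 = m' := by omega
    rw [h1, h2]
    -- C(2m'+2, m'+1) = 2 * C(2m'+1, m')
    have hsym : Nat.choose (2*m'+1) (m'+1) = Nat.choose (2*m'+1) m' := by
      have := Nat.choose_symm (n := 2*m'+1) (k := m'+1) (by omega)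
      exact (by simpa [show 2*m'+1-(m'+1) = m' by omega] using this : _ = _).symm
    have hcb : Nat.centralBinom (m'+1) = 2 * Nat.choose (2*m'+1) m' := by
      rw [Nat.centralBinom]
      have : 2*(m'+1) = (2*m'+1)+1 := by omega
      rw [this, Nat.choose_succ_succ' (2*m'+1) m']
      omega
    have := central_sq (m'+1) (by omega)
    rw [hcb] at this
    calc 4^(2*m'+2) = 16^(m'+1) := by rw [show 2*m'+2 = 2*(m'+1) by ring, pow_mul]; norm_num
    _ ≤ 4*(m'+1)*(2*Nat.choose (2*m'+1) m')^2 := this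
    _ = 8*(2*m'+2)*(Nat.choose (2*m'+1) m')^2 := by ring
  · -- k = 2m+1 ; (k-1)/2 = m
    have hkk : k = 2*m+1 := by omega
    subst hkk
    have h1 : (2*m+1-1) = 2*m := by omega
    have h2 : (2*m)/2 = m := by omega
    rw [h1, h2]
    rcases Nat.eq_zero_or_pos m with h0 | hm1
    · subst h0; norm_num
    · have := central_sq m hm1
      rw [Nat.centralBinom] at this
      calc 4^(2*m+1) = 4 * 16^m := by rw [pow_succ, mul_comm, pow_mul]; norm_num
      _ ≤ 4 * (4*m*(Nat.choose (2*m) m)^2) := Nat.mul_le_mul_left _ this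
      _ ≤ 8*(2*m+1)*(Nat.choose (2*m) m)^2 := by nlinarith [sq_nonneg (Nat.choose (2*m) m)]

noncomputable def cntT {k : ℕ} (τ : Fin k → Bool) : ℕ :=
  (Finset.univ.filter (fun j => τ j = true)).card

lemma sum_count (k : ℕ) (g : ℕ → ℝ) :
    ∑ τ : Fin k → Bool, g (cntT τ) = ∑ j ∈ range (k+1), (Nat.choose k j : ℝ) * g j := by
  classical
  have h1 : ∑ τ : Fin k → Bool, g (cntT τ) = ∑ s : Finset (Fin k), g s.card := by
    apply Finset.sum_nbij' (i := fun τ => Finset.univ.filter (fun j => τ j = true))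
      (j := fun s => fun j => decide (j ∈ s))
    · intro τ _; exact mem_univ _
    · intro s _; exact mem_univ _
    · intro τ _; funext j; simp
    · intro s _; ext j; simp
    · intro τ _; rfl
  rw [h1]
  have h2 : (Finset.univ : Finset (Finset (Fin k))) = (Finset.univ : Finset (Fin k)).powerset :=
    (Finset.powerset_univ).symm
  rw [h2, Finset.sum_powerset]
  simp only [Finset.card_univ, Fintype.card_fin]
  apply Finset.sum_congr rfl
  intro j hj
  rw [Finset.sum_congr rfl (fun s hs => by
    rw [(Finset.mem_powersetCard.mp hs).2]), Finset.sum_const, Finset.card_powersetCard,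
    Finset.card_univ, Fintype.card_fin, nsmul_eq_mul]

lemma tele (k m : ℕ) (hk : 1 ≤ k) (hm : m ≤ k - 1) :
    ∑ j ∈ range (m+1), (Nat.choose k j : ℝ) * ((k:ℝ) - 2*j)
      = (k:ℝ) * (Nat.choose (k-1) m : ℝ) := by
  rw [Finset.sum_range_succ']
  have step : ∀ j, j < m → (Nat.choose k (j+1) : ℝ) * ((k:ℝ) - 2*(j+1))
      = (k:ℝ) * (Nat.choose (k-1) (j+1)) - (k:ℝ) * (Nat.choose (k-1) j) := by
    intro j hj
    have hjk : j + 1 ≤ k - 1 := by omega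
    have e1 : k * Nat.choose (k-1) (j+1) = Nat.choose k (j+2) * (j+2) := by
      have := Nat.add_one_mul_choose_eq (k-1) (j+1)
      rwa [show k - 1 + 1 = k by omega] at this
    have e2 : k * Nat.choose (k-1) j = Nat.choose k (j+1) * (j+1) := by
      have := Nat.add_one_mul_choose_eq (k-1) j
      rwa [show k - 1 + 1 = k by omega] at this
    have e3 : Nat.choose k (j+2) * (j+2) = Nat.choose k (j+1) * (k - (j+1)) :=
      Nat.choose_succ_right_eq k (j+1)
    have e4 : ((k - (j+1) : ℕ) : ℝ) = (k:ℝ) - (j+1) := by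
      have : j + 1 ≤ k := by omega
      push_cast [this]; ring
    have := congrArg (fun z : ℕ => (z : ℝ)) (e1.trans e3)
    have h2 := congrArg (fun z : ℕ => (z : ℝ)) e2
    push_cast at this h2
    rw [e4] at this
    nlinarith [this, h2]
  have hc : ∀ j ∈ range m, (Nat.choose k (j+1) : ℝ) * ((k:ℝ) - 2*((j:ℕ)+1:ℕ))
      = (k:ℝ) * (Nat.choose (k-1) (j+1)) - (k:ℝ) * (Nat.choose (k-1) j) := by
    intro j hj
    have := step j (Finset.mem_range.mp hj)
    push_cast at this ⊢
    linarith
  rw [Finset.sum_congr rfl hc,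
    Finset.sum_range_sub (fun j => (k:ℝ) * (Nat.choose (k-1) j))]
  simp [Nat.choose_zero_right]

lemma khinchine (k : ℕ) (hk : 1 ≤ k) :
    (2:ℝ)^k * Real.sqrt ((k:ℝ)/2) ≤ ∑ τ : Fin k → Bool, |2*(cntT τ : ℝ) - k| := by
  classical
  rw [sum_count k (fun j => |2*(j:ℝ) - k|)]
  set m := (k-1)/2 with hmdef
  have hm : m ≤ k - 1 := Nat.div_le_self _ _
  have h2m : 2*m ≤ k - 1 := by omega
  -- the sum is ≥ twice the lower-tail sum
  set f : ℕ → ℝ := fun j => (Nat.choose k j : ℝ) * |2*(j:ℝ) - k| with hf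
  have hf0 : ∀ j, 0 ≤ f j := fun j => mul_nonneg (Nat.cast_nonneg _) (abs_nonneg _)
  have hsub : range (m+1) ∪ (range (m+1)).image (fun j => k - j) ⊆ range (k+1) := by
    intro j hj
    rcases Finset.mem_union.mp hj with h | h
    · exact Finset.mem_range.mpr (by have := Finset.mem_range.mp h; omega)
    · obtain ⟨i, hi, rfl⟩ := Finset.mem_image.mp h
      exact Finset.mem_range.mpr (by omega)
  have hdisj : Disjoint (range (m+1)) ((range (m+1)).image (fun j => k - j)) := by
    rw [Finset.disjoint_left]
    intro j hj hj2
    obtain ⟨i, hi, rfl⟩ := Finset.mem_image.mp hj2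
    have := Finset.mem_range.mp hj
    have := Finset.mem_range.mp hi
    omega
  have step1 : ∑ j ∈ range (m+1), f j + ∑ j ∈ (range (m+1)).image (fun j => k - j), f j
      ≤ ∑ j ∈ range (k+1), f j := by
    rw [← Finset.sum_union hdisj]
    exact Finset.sum_le_sum_of_subset_of_nonneg hsub (fun j _ _ => hf0 j)
  have hinj : ∀ a ∈ range (m+1), ∀ b ∈ range (m+1), k - a = k - b → a = b := by
    intro a ha b hb hab
    have := Finset.mem_range.mp ha; have := Finset.mem_range.mp hb; omega
  have hptw : ∀ j ∈ range (m+1), f (k - j) = f j := by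
    intro j hj
    have hjm := Finset.mem_range.mp hj
    have hjk : j ≤ k := by omega
    simp only [hf]
    rw [Nat.choose_symm hjk]
    congr 1
    have : ((k - j : ℕ) : ℝ) = (k:ℝ) - j := by push_cast [hjk]; ring
    rw [this, abs_sub_comm]
    congr 1; ring
  have himg : ∑ j ∈ (range (m+1)).image (fun j => k - j), f j = ∑ j ∈ range (m+1), f j := by
    rw [Finset.sum_image hinj]
    exact Finset.sum_congr rfl hptw
  have habs : ∀ j ∈ range (m+1), f j = (Nat.choose k j : ℝ) * ((k:ℝ) - 2*j) := by
    intro j hj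
    have hjm := Finset.mem_range.mp hj
    have h1 : 2*j + 1 ≤ k := by omega
    have h2 : 2*(j:ℝ) - k ≤ 0 := by
      have := (Nat.cast_le (α := ℝ)).mpr h1
      push_cast at this; linarith
    simp only [hf]
    rw [abs_of_nonpos h2]; ring
  have hlow : ∑ j ∈ range (m+1), f j = (k:ℝ) * (Nat.choose (k-1) m : ℝ) := by
    rw [Finset.sum_congr rfl habs]; exact tele k m hk hm
  have hbound : (2:ℝ)^k * Real.sqrt ((k:ℝ)/2) ≤ 2 * ((k:ℝ) * (Nat.choose (k-1) m : ℝ)) := by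
    have hcb := choose_bound k hk
    set c : ℝ := (Nat.choose (k-1) m : ℝ) with hc
    have hcb' : (4:ℝ)^k ≤ 8 * k * c^2 := by
      have := (Nat.cast_le (α := ℝ)).mpr hcb
      push_cast at this
      convert this using 2 <;> norm_num
    have hkpos : (0:ℝ) < k := by exact_mod_cast hk
    have hcpos : (0:ℝ) ≤ c := Nat.cast_nonneg _
    have h2k : (0:ℝ) < (2:ℝ)^k := by positivity
    have key : (k:ℝ)/2 ≤ (2*k*c/(2:ℝ)^k)^2 := by
      rw [div_pow, mul_pow, mul_pow]
      rw [div_le_div_iff₀ (by norm_num) (by positivity)]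
      have : ((2:ℝ)^k)^2 = (4:ℝ)^k := by
        rw [← pow_mul, mul_comm, pow_mul]; norm_num
      rw [this]
      calc (k:ℝ) * (4:ℝ)^k ≤ (k:ℝ) * (8*k*c^2) := by
            apply mul_le_mul_of_nonneg_left hcb' (le_of_lt hkpos)
      _ = 2^2*(k:ℝ)^2*c^2 * 2 := by ring
    have hsq : Real.sqrt ((k:ℝ)/2) ≤ 2*k*c/(2:ℝ)^k := by
      have hb : (0:ℝ) ≤ 2*k*c/(2:ℝ)^k := by positivity
      calc Real.sqrt ((k:ℝ)/2) ≤ Real.sqrt ((2*k*c/(2:ℝ)^k)^2) := Real.sqrt_le_sqrt key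
      _ = 2*k*c/(2:ℝ)^k := Real.sqrt_sq hb
    calc (2:ℝ)^k * Real.sqrt ((k:ℝ)/2) ≤ (2:ℝ)^k * (2*k*c/(2:ℝ)^k) :=
          mul_le_mul_of_nonneg_left hsq (le_of_lt h2k)
    _ = 2 * ((k:ℝ) * c) := by field_simp
  calc (2:ℝ)^k * Real.sqrt ((k:ℝ)/2) ≤ 2 * ((k:ℝ) * (Nat.choose (k-1) m : ℝ)) := hbound
  _ = ∑ j ∈ range (m+1), f j + ∑ j ∈ (range (m+1)).image (fun j => k - j), f j := by
        rw [himg, hlow]; ring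
  _ ≤ ∑ j ∈ range (k+1), f j := step1


noncomputable def bmajT {k : ℕ} (τ : Fin k → Bool) : Bool := decide (k ≤ 2 * cntT τ)

noncomputable def mcT {k : ℕ} (τ : Fin k → Bool) : ℕ :=
  (Finset.univ.filter (fun j => bmajT τ ≠ τ j)).card

lemma cnt_le {k : ℕ} (τ : Fin k → Bool) : cntT τ ≤ k := by
  have := Finset.card_filter_le (Finset.univ : Finset (Fin k)) (fun j => τ j = true)
  simpa [cntT] using this

lemma mc_eq {k : ℕ} (τ : Fin k → Bool) :
    ((mcT τ : ℝ)) = ((k:ℝ) - |2*(cntT τ:ℝ) - k|)/2 := by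
  classical
  have hsplit := Finset.card_filter_add_card_filter_not
    (s := (Finset.univ : Finset (Fin k))) (p := fun j => τ j = true)
  have hck := cnt_le τ
  rcases le_or_gt k (2 * cntT τ) with hle | hlt
  · have hb : bmajT τ = true := by simp [bmajT, hle]
    have hmc : mcT τ = k - cntT τ := by
      have : (Finset.univ.filter (fun j => bmajT τ ≠ τ j)).card
          = (Finset.univ.filter (fun j => ¬ (τ j = true))).card := by
        congr 1
        apply Finset.filter_congr
        intro j _
        rw [hb]; cases τ j <;> simp
      rw [mcT, this]
      have hcnt : (Finset.univ.filter (fun j => τ j = true)).card = cntT τ := rfl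
      simp only [Finset.card_univ, Fintype.card_fin] at hsplit
      omega
    have habs : |2*(cntT τ:ℝ) - k| = 2*(cntT τ:ℝ) - k := by
      rw [abs_of_nonneg]
      have := (Nat.cast_le (α := ℝ)).mpr hle
      push_cast at this
      linarith
    rw [hmc, habs]
    push_cast [hck]
    ring
  · have hb : bmajT τ = false := by simp [bmajT]; omega
    have hmc : mcT τ = cntT τ := by
      have : (Finset.univ.filter (fun j => bmajT τ ≠ τ j)).card
          = (Finset.univ.filter (fun j => τ j = true)).card := by
        congr 1
        apply Finset.filter_congr
        intro j _
        rw [hb]; cases τ j <;> simp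
      rw [mcT, this]
      rfl
    have habs : |2*(cntT τ:ℝ) - k| = (k:ℝ) - 2*(cntT τ:ℝ) := by
      rw [abs_of_nonpos]
      · ring
      · have := (Nat.cast_le (α := ℝ)).mpr (le_of_lt hlt)
        push_cast at this
        linarith
    rw [hmc, habs]
    push_cast
    ring




-- coordinate sum over a pi type
lemma sum_pi_coord {d k : ℕ} (i : Fin d) (g : (Fin k → Bool) → ℝ) :
    ∑ σ : Fin d → (Fin k → Bool), g (σ i)
      = ((2^k : ℕ)^(d-1) : ℝ) * ∑ τ : Fin k → Bool, g τ := by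
  classical
  rw [← Equiv.sum_comp (Equiv.piSplitAt i (fun _ : Fin d => (Fin k → Bool))).symm
    (fun σ => g (σ i))]
  have : ∀ p : (Fin k → Bool) × ({a : Fin d // a ≠ i} → (Fin k → Bool)),
      g (((Equiv.piSplitAt i (fun _ : Fin d => (Fin k → Bool))).symm p) i) = g p.1 := by
    intro p
    congr 1
    simp [Equiv.piSplitAt_symm_apply]
  have hcard : Fintype.card ({a : Fin d // a ≠ i} → (Fin k → Bool)) = (2^k)^(d-1) := by
    rw [Fintype.card_fun]
    congr 1
    · simp [Fintype.card_fun]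
    · rw [Fintype.card_subtype_compl]
      simp [Fintype.card_subtype_eq]
  rw [Fintype.sum_congr _ _ this, Fintype.sum_prod_type]
  simp only [Finset.sum_const, Finset.card_univ, nsmul_eq_mul, hcard]
  rw [← Finset.mul_sum]
  push_cast
  ring


lemma pair_sum {Ω : Type*} [Fintype Ω] (e : Ω ≃ Ω) (f : Ω → ℝ)
    (h : ∀ σ, f σ + f (e σ) = 1) :
    ∑ σ, f σ = (Fintype.card Ω : ℝ) / 2 := by
  have h1 : ∑ σ, f (e σ) = ∑ σ, f σ := Equiv.sum_comp e f
  have h2 : ∑ σ, (f σ + f (e σ)) = (Fintype.card Ω : ℝ) := by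
    simp [h, Finset.sum_const, Finset.card_univ]
  rw [Finset.sum_add_distrib, h1] at h2
  linarith

lemma card_filter_lt (n m : ℕ) (h : m ≤ n) :
    ((Finset.univ : Finset (Fin n)).filter (fun t => t.1 < m)).card = m := by
  classical
  have : ((Finset.univ : Finset (Fin n)).filter (fun t => t.1 < m)).card
      = (Finset.univ : Finset (Fin m)).card := by
    rcases Nat.eq_zero_or_pos m with rfl | hm
    · simp
    apply Finset.card_nbij' (i := fun t => ⟨t.1 % m, Nat.mod_lt _ hm⟩)
      (j := fun u => ⟨u.1, lt_of_lt_of_le u.2 h⟩)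
    · intro t ht; exact Finset.mem_univ _
    · intro u _
      refine Finset.mem_filter.mpr ⟨Finset.mem_univ _, u.2⟩
    · intro t ht
      have := (Finset.mem_filter.mp ht).2
      ext
      simp [Nat.mod_eq_of_lt this]
    · intro u _
      ext
      simp [Nat.mod_eq_of_lt u.2]
  rw [this, Finset.card_univ, Fintype.card_fin]

lemma sum_blocks {n d k : ℕ} (hd : 0 < d) (hk : 0 < k) (hdk : d * k ≤ n) (F : Fin n → ℕ)
    (hF : ∀ t : Fin n, ¬ (t.1 < d*k) → F t = 0) :
    ∑ t : Fin n, F t = ∑ p : Fin d × Fin k,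
      F ⟨p.2.1 + p.1.1 * k, lt_of_lt_of_le
        (by calc p.2.1 + p.1.1 * k < k + p.1.1 * k := by omega
            _ = (p.1.1 + 1) * k := by ring
            _ ≤ d * k := Nat.mul_le_mul_right k p.1.2) hdk⟩ := by
  classical
  rw [← Finset.sum_filter_add_sum_filter_not Finset.univ (fun t : Fin n => t.1 < d*k)]
  have hz : ∑ t ∈ Finset.univ.filter (fun t : Fin n => ¬ t.1 < d*k), F t = 0 := by
    apply Finset.sum_eq_zero
    intro t ht
    exact hF t (Finset.mem_filter.mp ht).2
  rw [hz, add_zero]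
  have hdiv : ∀ t : Fin n, t.1 < d * k → t.1 / k < d := by
    intro t ht
    exact (Nat.div_lt_iff_lt_mul hk).mpr (by first | exact ht | (rw [mul_comm k d]; exact ht))
  apply Finset.sum_nbij'
    (i := fun t => ((⟨t.1 / k % d, Nat.mod_lt _ hd⟩ : Fin d), (⟨t.1 % k, Nat.mod_lt _ hk⟩ : Fin k)))
    (j := fun p => ⟨p.2.1 + p.1.1 * k, lt_of_lt_of_le
        (by calc p.2.1 + p.1.1 * k < k + p.1.1 * k := by omega
            _ = (p.1.1 + 1) * k := by ring
            _ ≤ d * k := Nat.mul_le_mul_right k p.1.2) hdk⟩)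
  · intro t ht; exact Finset.mem_univ _
  · intro p _
    apply Finset.mem_filter.mpr
    refine ⟨Finset.mem_univ _, ?_⟩
    calc p.2.1 + p.1.1 * k < k + p.1.1 * k := by omega
    _ = (p.1.1 + 1) * k := by ring
    _ ≤ d * k := Nat.mul_le_mul_right k p.1.2
  · intro t ht
    have h1 := (Finset.mem_filter.mp ht).2
    have h2 := hdiv t h1
    ext
    simp only []
    rw [Nat.mod_eq_of_lt h2]
    rw [Nat.mod_add_div' t.1 k]
  · intro p _
    have e1 : (p.2.1 + p.1.1 * k) / k = p.1.1 := by
      rw [Nat.add_mul_div_right _ _ hk, Nat.div_eq_of_lt p.2.2]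
      omega
    have e2 : (p.2.1 + p.1.1 * k) % k = p.2.1 := by
      rw [Nat.add_mul_mod_self_right, Nat.mod_eq_of_lt p.2.2]
    have e3 : (p.2.1 + p.1.1 * k) / k % d = p.1.1 := by
      rw [e1, Nat.mod_eq_of_lt p.1.2]
    apply Prod.ext
    · exact Fin.ext e3
    · exact Fin.ext e2
  · intro t ht
    have h1 := (Finset.mem_filter.mp ht).2
    have h2 := hdiv t h1
    congr 1
    ext
    simp only []
    rw [Nat.mod_eq_of_lt h2, Nat.mod_add_div' t.1 k]


/-- Expected number of mistakes of a randomized learner in the agnostic transductive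
online game: `A x l` is the probability that the learner predicts `1` given the (known)
instance sequence `x` and the list `l` of previously revealed true labels. -/
noncomputable def expMistakes {X : Type*} {n : ℕ} (A : (Fin n → X) → List Bool → ℝ)
    (x : Fin n → X) (y : Fin n → Bool) : ℝ :=
  ∑ t : Fin n,
    (if y t then 1 - A x (List.ofFn (fun i : Fin t.1 => y ⟨i.1, i.2.trans t.2⟩))
     else A x (List.ofFn (fun i : Fin t.1 => y ⟨i.1, i.2.trans t.2⟩)))

/-- Number of errors of hypothesis `h` on the labeled sequence `(x, y)`. -/
noncomputable def errCount {X : Type*} {n : ℕ} (x : Fin n → X) (y : Fin n → Bool)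
    (h : X → Bool) : ℕ :=
  (Finset.univ.filter (fun t : Fin n => h (x t) ≠ y t)).card

/-- `H` shatters the finite set `s`. -/
def Shatters {X : Type*} (H : Set (X → Bool)) (s : Finset X) : Prop :=
  ∀ f : X → Bool, ∃ h ∈ H, ∀ a ∈ s, h a = f a

/-- Agnostic transductive lower bound: if `0 < VC(H) = d < ∞` and `n ≥ d`, then every
(randomized) learner suffers regret at least `d·√(⌊n/d⌋)/(2√2) = Ω(√(dn))` on some
instance sequence and labeling. -/
theorem agnostic_transductive_lower_bound {X : Type*} (H : Set (X → Bool)) (d n : ℕ)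
    (hVCge : ∃ s : Finset X, s.card = d ∧ Shatters H s)
    (hVCle : ∀ s : Finset X, Shatters H s → s.card ≤ d)
    (hd : 0 < d) (hdn : d ≤ n) :
    ∀ A : (Fin n → X) → List Bool → ℝ,
      (∀ x l, 0 ≤ A x l ∧ A x l ≤ 1) →
      ∃ (x : Fin n → X) (y : Fin n → Bool), ∃ h ∈ H,
        (d : ℝ) * Real.sqrt ((n / d : ℕ) : ℝ) / (2 * Real.sqrt 2) ≤
          expMistakes A x y - errCount x y h := by
  classical
  intro A hA
  obtain ⟨s, hs, hshat⟩ := hVCge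
  set k := n / d with hkdef
  have hk1 : 1 ≤ k := (Nat.one_le_div_iff hd).mpr hdn
  have hk0 : 0 < k := hk1
  have hdkn : d * k ≤ n := by
    rw [mul_comm]; exact Nat.div_mul_le_self n d
  set E : {a // a ∈ s} ≃ Fin d := s.equivFin.trans (finCongr hs) with hEdef
  set e : Fin d → X := fun i => (E.symm i : X) with hedef
  have hes : ∀ i, (e i) ∈ s := fun i => (E.symm i).2
  have hEe : ∀ i, E ⟨e i, hes i⟩ = i := by
    intro i
    have h1 : (⟨e i, hes i⟩ : {a // a ∈ s}) = E.symm i := rfl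
    rw [h1, Equiv.apply_symm_apply]
  have hidx : ∀ t : Fin n, t.1 < d * k → t.1 / k < d := fun t ht =>
    (Nat.div_lt_iff_lt_mul hk0).mpr ht
  set x : Fin n → X :=
    (fun t => if ht : t.1 < d * k then e ⟨t.1 / k, hidx t ht⟩ else e ⟨0, hd⟩) with hxdef
  set Y : (Fin d → Fin k → Bool) → Fin n → Bool := fun σ t =>
    if ht : t.1 < d * k then σ ⟨t.1 / k, hidx t ht⟩ ⟨t.1 % k, Nat.mod_lt _ hk0⟩
    else bmajT (σ ⟨0, hd⟩) with hYdef
  have hsel : ∀ σ : Fin d → Fin k → Bool, ∃ h ∈ H, ∀ a ∈ s, h a =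
      (fun a => if ha : a ∈ s then bmajT (σ (E ⟨a, ha⟩)) else false) a := fun σ => hshat _
  choose hfun hmem hagree using hsel
  have hval : ∀ σ i, hfun σ (e i) = bmajT (σ i) := by
    intro σ i
    rw [hagree σ (e i) (hes i)]
    simp only [dif_pos (hes i), hEe]
  -- (b) per-σ error count
  have herr : ∀ σ, errCount x (Y σ) (hfun σ) = ∑ i : Fin d, mcT (σ i) := by
    intro σ
    rw [errCount, Finset.card_filter]
    have hzero : ∀ t : Fin n, ¬ (t.1 < d*k) →
        (if hfun σ (x t) ≠ Y σ t then 1 else 0) = 0 := by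
      intro t ht
      have hx : x t = e ⟨0, hd⟩ := by rw [hxdef]; exact dif_neg ht
      have hy : Y σ t = bmajT (σ ⟨0, hd⟩) := by rw [hYdef]; exact dif_neg ht
      rw [hx, hy, hval]
      simp
    rw [sum_blocks hd hk0 hdkn _ hzero, Fintype.sum_prod_type]
    apply Finset.sum_congr rfl
    intro i _
    rw [mcT, Finset.card_filter]
    apply Finset.sum_congr rfl
    intro j _
    have hlt : j.1 + i.1 * k < d * k := by
      calc j.1 + i.1 * k < k + i.1 * k := by omega
      _ = (i.1 + 1) * k := by ring
      _ ≤ d * k := Nat.mul_le_mul_right k i.2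
    have e1 : (j.1 + i.1*k)/k = i.1 := by
      rw [Nat.add_mul_div_right _ _ hk0, Nat.div_eq_of_lt j.2]; omega
    have e2 : (j.1 + i.1*k)%k = j.1 := by
      rw [Nat.add_mul_mod_self_right, Nat.mod_eq_of_lt j.2]
    have hx : x ⟨j.1 + i.1 * k, lt_of_lt_of_le hlt hdkn⟩ = e i := by
      rw [hxdef]
      simp only [dif_pos hlt]
      congr 1
      exact Fin.ext e1
    have hy : Y σ ⟨j.1 + i.1 * k, lt_of_lt_of_le hlt hdkn⟩ = σ i j := by
      rw [hYdef]
      simp only [dif_pos hlt]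
      congr 1 <;> [exact Fin.ext e1; exact Fin.ext e2]
    simp only [hx, hy, hval]
  -- (a) expected mistakes
  have hcardΩ : Fintype.card (Fin d → Fin k → Bool) = (2^k)^d := by
    simp [Fintype.card_fun]
  have hexp : (((2^k)^d : ℕ) : ℝ) * ((d*k : ℕ) : ℝ)/2
      ≤ ∑ σ : Fin d → Fin k → Bool, expMistakes A x (Y σ) := by
    simp only [expMistakes]
    rw [Finset.sum_comm]
    rw [← Finset.sum_filter_add_sum_filter_not Finset.univ (fun t : Fin n => t.1 < d*k)]
    have hpair : ∀ t ∈ Finset.univ.filter (fun t : Fin n => t.1 < d*k),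
        ∑ σ : Fin d → Fin k → Bool,
          (if Y σ t then 1 - A x (List.ofFn (fun u : Fin t.1 => Y σ ⟨u.1, u.2.trans t.2⟩))
           else A x (List.ofFn (fun u : Fin t.1 => Y σ ⟨u.1, u.2.trans t.2⟩)))
        = (((2^k)^d : ℕ) : ℝ) / 2 := by
      intro t htm
      have ht : t.1 < d * k := (Finset.mem_filter.mp htm).2
      set i0 : Fin d := ⟨t.1/k, hidx t ht⟩ with hi0
      set j0 : Fin k := ⟨t.1 % k, Nat.mod_lt _ hk0⟩ with hj0
      set flip : (Fin d → Fin k → Bool) → (Fin d → Fin k → Bool) :=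
        fun σ i j => if i = i0 ∧ j = j0 then !(σ i j) else σ i j with hflip
      have hinv : Function.Involutive flip := by
        intro σ; funext i j
        by_cases hc : i = i0 ∧ j = j0 <;> simp [hflip, hc]
      rw [← hcardΩ]
      apply pair_sum (Function.Involutive.toPerm flip hinv)
      intro σ
      have hfσ : (Function.Involutive.toPerm flip hinv) σ = flip σ := rfl
      rw [hfσ]
      have hYt : Y (flip σ) t = ! Y σ t := by
        rw [hYdef]
        simp only [dif_pos ht]
        simp [hflip, hi0, hj0]
      have hpre : (fun u : Fin t.1 => Y (flip σ) ⟨u.1, u.2.trans t.2⟩)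
          = (fun u : Fin t.1 => Y σ ⟨u.1, u.2.trans t.2⟩) := by
        funext u
        have hu : u.1 < d*k := lt_trans u.2 ht
        rw [hYdef]
        simp only [dif_pos hu]
        have hne : ¬((⟨u.1/k, by exact hidx ⟨u.1, u.2.trans t.2⟩ hu⟩ : Fin d) = i0 ∧
            (⟨u.1%k, Nat.mod_lt _ hk0⟩ : Fin k) = j0) := by
          rintro ⟨h1, h2⟩
          have q1 : u.1 / k = t.1 / k := congrArg Fin.val h1
          have q2 : u.1 % k = t.1 % k := congrArg Fin.val h2
          have : u.1 = t.1 := by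
            calc u.1 = u.1 % k + u.1 / k * k := (Nat.mod_add_div' u.1 k).symm
            _ = t.1 % k + t.1 / k * k := by rw [q1, q2]
            _ = t.1 := Nat.mod_add_div' t.1 k
          exact absurd this (Nat.ne_of_lt u.2)
        simp [hflip, hne]
      rw [hpre]
      cases hb : Y σ t <;> simp [hYt, hb] <;> ring
    rw [Finset.sum_congr rfl hpair, Finset.sum_const, card_filter_lt n (d*k) hdkn,
      nsmul_eq_mul]
    have hnonneg : 0 ≤ ∑ t ∈ Finset.univ.filter (fun t : Fin n => ¬ t.1 < d*k),
        ∑ σ : Fin d → Fin k → Bool,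
          (if Y σ t then 1 - A x (List.ofFn (fun u : Fin t.1 => Y σ ⟨u.1, u.2.trans t.2⟩))
           else A x (List.ofFn (fun u : Fin t.1 => Y σ ⟨u.1, u.2.trans t.2⟩))) := by
      apply Finset.sum_nonneg
      intro t _
      apply Finset.sum_nonneg
      intro σ _
      cases hb : Y σ t <;> simp [hb]
      · exact (hA x _).1
      · exact (hA x _).2
    push_cast
    push_cast at hnonneg ⊢
    nlinarith [hnonneg]
  -- (b) sum of error counts
  have herrsum : ∑ σ : Fin d → Fin k → Bool, (errCount x (Y σ) (hfun σ) : ℝ)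
      = (d : ℝ) * (((2^k : ℕ)^(d-1) : ℕ) : ℝ) * ∑ τ : Fin k → Bool, (mcT τ : ℝ) := by
    have h1 : ∀ σ : Fin d → Fin k → Bool, (errCount x (Y σ) (hfun σ) : ℝ)
        = ∑ i : Fin d, (mcT (σ i) : ℝ) := by
      intro σ
      rw [herr σ]
      push_cast
      rfl
    rw [Finset.sum_congr rfl (fun σ _ => h1 σ), Finset.sum_comm]
    rw [Finset.sum_congr rfl (fun i _ => sum_pi_coord i (fun τ => (mcT τ : ℝ)))]
    rw [Finset.sum_const, Finset.card_univ, Fintype.card_fin, nsmul_eq_mul]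
    push_cast
    ring
  -- Khinchine bound on the minority-count sum
  have hM : ∑ τ : Fin k → Bool, (mcT τ : ℝ)
      ≤ ((2:ℝ)^k * k - (2:ℝ)^k * Real.sqrt ((k:ℝ)/2))/2 := by
    have hkh := khinchine k hk1
    have hsum : ∑ τ : Fin k → Bool, (mcT τ : ℝ)
        = ((2:ℝ)^k * k - ∑ τ : Fin k → Bool, |2*(cntT τ:ℝ) - k|)/2 := by
      rw [Finset.sum_congr rfl (fun τ _ => mc_eq τ), ← Finset.sum_div,
        Finset.sum_sub_distrib]
      simp only [Finset.sum_const, Finset.card_univ, Fintype.card_fun,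
        Fintype.card_bool, Fintype.card_fin, nsmul_eq_mul]
      push_cast
      ring
    rw [hsum]
    linarith
  -- final assembly
  set N : ℝ := (((2^k)^d : ℕ) : ℝ) with hN
  have hNpos : 0 < N := by positivity
  have hc1 : (((2^k : ℕ)^(d-1) : ℕ) : ℝ) * (2:ℝ)^k = N := by
    rw [hN]
    push_cast
    rw [← pow_succ]
    congr 1
    omega
  have hc1pos : (0:ℝ) ≤ (((2^k : ℕ)^(d-1) : ℕ) : ℝ) := by positivity
  set T : ℝ := (d : ℝ) * Real.sqrt ((k : ℕ) : ℝ) / (2 * Real.sqrt 2) with hT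
  have hT2 : T = (d:ℝ) * Real.sqrt ((k:ℝ)/2) / 2 := by
    have hs2 : Real.sqrt ((k:ℝ)/2) = Real.sqrt ((k:ℕ):ℝ) / Real.sqrt 2 :=
      Real.sqrt_div (Nat.cast_nonneg k) 2
    have hne : Real.sqrt 2 ≠ 0 := by positivity
    rw [hT, hs2]
    field_simp
  have hmain : N * T ≤ ∑ σ : Fin d → Fin k → Bool,
      (expMistakes A x (Y σ) - (errCount x (Y σ) (hfun σ) : ℝ)) := by
    rw [Finset.sum_sub_distrib, herrsum]
    have hstep : (d : ℝ) * (((2^k : ℕ)^(d-1) : ℕ) : ℝ) * ∑ τ : Fin k → Bool, (mcT τ : ℝ)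
        ≤ (d : ℝ) * (((2^k : ℕ)^(d-1) : ℕ) : ℝ)
          * (((2:ℝ)^k * k - (2:ℝ)^k * Real.sqrt ((k:ℝ)/2))/2) := by
      apply mul_le_mul_of_nonneg_left hM
      positivity
    rw [hT2]
    have hexpand : (d : ℝ) * (((2^k : ℕ)^(d-1) : ℕ) : ℝ)
          * (((2:ℝ)^k * k - (2:ℝ)^k * Real.sqrt ((k:ℝ)/2))/2)
        = N * ((d:ℝ)*k)/2 - N * ((d:ℝ) * Real.sqrt ((k:ℝ)/2) / 2) := by
      rw [← hc1]
      ring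
    have hexp' : N * ((d:ℝ)*(k:ℝ))/2 ≤ ∑ σ : Fin d → Fin k → Bool, expMistakes A x (Y σ) := by
      refine le_trans (le_of_eq ?_) hexp
      rw [hN]
      push_cast
      ring
    linarith [hstep, hexp']
  have hex : ∃ σ : Fin d → Fin k → Bool, T ≤
      expMistakes A x (Y σ) - (errCount x (Y σ) (hfun σ) : ℝ) := by
    by_contra hcon
    push_neg at hcon
    have : ∑ σ : Fin d → Fin k → Bool,
        (expMistakes A x (Y σ) - (errCount x (Y σ) (hfun σ) : ℝ))
        < ∑ _σ : Fin d → Fin k → Bool, T := by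
      apply Finset.sum_lt_sum_of_nonempty Finset.univ_nonempty
      intro σ _
      exact hcon σ
    rw [Finset.sum_const, Finset.card_univ, hcardΩ, nsmul_eq_mul] at this
    rw [← hN] at this
    linarith [hmain]
  obtain ⟨σ, hσ⟩ := hex
  exact ⟨x, Y σ, hfun σ, hmem σ, hσ⟩
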